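/- Let P ≥ 1 be an integer and m a real number with 0 < m < 1. Define G⁺_{μν} = -(1-m)^{P+μ-1} - (1-m)^{P+ν-1} + ((3-m)/(2-m))(1-m)^{μ+ν-1} for 1 ≤ μ, ν ≤ P. Then G⁺ is strictly decreasing in each index: for all 1 ≤ μ < μ' ≤ P and 1 ≤ ν ≤ P one has G⁺_{μ'ν} < G⁺_{μν}, and for all 1 ≤ μ ≤ P and 1 ≤ ν < ν' ≤ P one has G⁺_{μν'} < G⁺_{μν}. -/
import Mathlib


/-- Absolute-position coefficient
`G⁺_{μν} = -(1-m)^{P+μ-1} - (1-m)^{P+ν-1} + ((3-m)/(2-m))(1-m)^{μ+ν-1}`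
(one-based indices). -/
noncomputable def Gplus (P : ℕ) (m : ℝ) (μ ν : ℕ) : ℝ :=
  -(1 - m) ^ (P + μ - 1) - (1 - m) ^ (P + ν - 1)
    + ((3 - m) / (2 - m)) * (1 - m) ^ (μ + ν - 1)

lemma Gplus_symm (P : ℕ) (m : ℝ) (μ ν : ℕ) : Gplus P m μ ν = Gplus P m ν μ := by
  unfold Gplus
  rw [Nat.add_comm μ ν]
  ring

lemma Gplus_key (P : ℕ) (hP : 1 ≤ P) (m : ℝ) (hm : 0 < m) (hm' : m < 1) :
    ∀ μ μ' ν : ℕ, 1 ≤ μ → μ < μ' → μ' ≤ P → 1 ≤ ν → ν ≤ P →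
      Gplus P m μ' ν < Gplus P m μ ν := by
  intro μ μ' ν hμ hμμ' hμ'P hν hνP
  set q : ℝ := 1 - m with hq
  have hq0 : 0 < q := by simp [hq]; linarith
  have hq1 : q < 1 := by simp [hq]; linarith
  have h2m : (0:ℝ) < 2 - m := by linarith
  have hc : 1 < (3 - m) / (2 - m) := by
    rw [one_lt_div h2m]; linarith
  unfold Gplus
  have e1 : P + μ - 1 = (μ - 1) + P := by omega
  have e2 : P + μ' - 1 = (μ' - 1) + P := by omega
  have e3 : μ + ν - 1 = (μ - 1) + ν := by omega
  have e4 : μ' + ν - 1 = (μ' - 1) + ν := by omega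
  rw [e1, e2, e3, e4, pow_add, pow_add, pow_add, pow_add]
  have hab : q ^ (μ' - 1) < q ^ (μ - 1) :=
    pow_lt_pow_right_of_lt_one₀ hq0 hq1 (by omega)
  have hPν : q ^ P ≤ q ^ ν :=
    pow_le_pow_of_le_one hq0.le hq1.le hνP
  have hqν : 0 < q ^ ν := pow_pos hq0 ν
  have hfac : 0 < (q ^ (μ - 1) - q ^ (μ' - 1)) * ((3 - m) / (2 - m) * q ^ ν - q ^ P) := by
    apply mul_pos
    · linarith
    · nlinarith
  nlinarith [hfac]

/-- For `0 < m < 1`, `G⁺` is strictly decreasing in each of its two indices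
(the basis of the paper's periphery-to-core rule). -/
theorem Gplus_strict_anti
    (P : ℕ) (hP : 1 ≤ P) (m : ℝ) (hm : 0 < m) (hm' : m < 1) :
    (∀ μ μ' ν : ℕ, 1 ≤ μ → μ < μ' → μ' ≤ P → 1 ≤ ν → ν ≤ P →
      Gplus P m μ' ν < Gplus P m μ ν) ∧
    (∀ μ ν ν' : ℕ, 1 ≤ μ → μ ≤ P → 1 ≤ ν → ν < ν' → ν' ≤ P →
      Gplus P m μ ν' < Gplus P m μ ν) := by
  refine ⟨Gplus_key P hP m hm hm', ?_⟩
  intro μ ν ν' hμ hμP hν hνν' hν'P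
  rw [Gplus_symm P m μ ν', Gplus_symm P m μ ν]
  exact Gplus_key P hP m hm hm' ν ν' μ hν hνν' hν'P hμ hμP
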